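/- Let w₁, ..., w_n be i.i.d. non-negative integer-valued random variables with P(w₁ = k) = p_k, and let W = |{i + wᵢ : 1 ≤ i ≤ n}|. Then E[W] ≥ (n/2)·(1 + Σ_{k≥0} p_k²). -/

import Mathlib

open MeasureTheory ProbabilityTheory
open scoped ENNReal

lemma comb_lemma {n : ℕ} (f : Fin n → ℕ) :
    n ≤ (Finset.univ.image f).card
      + (Finset.univ.filter (fun ij : Fin n × Fin n => ij.1 < ij.2 ∧ f ij.1 = f ij.2)).card := by
  classical
  set s := Finset.univ.image f with hs
  set T := Finset.univ.filter (fun ij : Fin n × Fin n => ij.1 < ij.2 ∧ f ij.1 = f ij.2) with hT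
  have hn : n = ∑ v ∈ s, (Finset.univ.filter (fun i => f i = v)).card := by
    have := Finset.card_eq_sum_card_image f (Finset.univ : Finset (Fin n))
    simpa using this
  have hTcard : T.card = ∑ v ∈ s, (T.filter (fun ij => f ij.1 = v)).card := by
    apply Finset.card_eq_sum_card_fiberwise
    intro ij hij
    simp only [hT, Finset.mem_filter, Finset.mem_univ, true_and] at hij
    exact Finset.mem_image_of_mem f (Finset.mem_univ ij.1)
  have key : ∀ v ∈ s, (Finset.univ.filter (fun i => f i = v)).card
      ≤ 1 + (T.filter (fun ij => f ij.1 = v)).card := by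
    intro v hv
    set F := Finset.univ.filter (fun i => f i = v) with hF
    have hFne : F.Nonempty := by
      obtain ⟨i, _, hi⟩ := Finset.mem_image.mp hv
      exact ⟨i, by simp [hF, hi]⟩
    set i₀ := F.min' hFne with hi₀
    have hi₀F : i₀ ∈ F := F.min'_mem hFne
    have hinj : ∀ j ∈ F.erase i₀, ((i₀, j) : Fin n × Fin n) ∈ T.filter (fun ij => f ij.1 = v) := by
      intro j hj
      have hjF := Finset.mem_of_mem_erase hj
      have hjne := Finset.ne_of_mem_erase hj
      have h1 : i₀ < j := lt_of_le_of_ne (F.min'_le j hjF) (Ne.symm hjne)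
      have h2 : f i₀ = v := (Finset.mem_filter.mp hi₀F).2
      have h3 : f j = v := (Finset.mem_filter.mp hjF).2
      simp [hT, Finset.mem_filter, h1, h2, h3]
    have hcard : (F.erase i₀).card ≤ (T.filter (fun ij => f ij.1 = v)).card := by
      apply Finset.card_le_card_of_injOn (fun j => ((i₀, j) : Fin n × Fin n)) hinj
      intro a _ b _ hab
      simpa using congrArg Prod.snd hab
    have : F.card ≤ 1 + (F.erase i₀).card := by
      rw [Finset.card_erase_of_mem hi₀F]
      omega
    omega
  calc n = ∑ v ∈ s, (Finset.univ.filter (fun i => f i = v)).card := hn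
    _ ≤ ∑ v ∈ s, (1 + (T.filter (fun ij => f ij.1 = v)).card) := Finset.sum_le_sum key
    _ = s.card + ∑ v ∈ s, (T.filter (fun ij => f ij.1 = v)).card := by
        rw [Finset.sum_add_distrib]; simp [mul_comm]
    _ = s.card + T.card := by rw [hTcard]

lemma partition_lemma (P : ℕ → ℝ≥0∞) :
    (∑' k, P k ^ 2) + ((∑' dk : ℕ × ℕ, P dk.2 * P (dk.2 + dk.1 + 1))
      + (∑' dk : ℕ × ℕ, P dk.2 * P (dk.2 + dk.1 + 1))) ≤ (∑' k, P k) * (∑' k, P k) := by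
  classical
  set G : ℕ × ℕ → ℝ≥0∞ := fun kl => P kl.1 * P kl.2 with hG
  have hRHS : (∑' k, P k) * (∑' k, P k) = ∑' kl : ℕ × ℕ, G kl := by
    rw [ENNReal.tsum_prod']
    have h1 : ∀ a, (∑' b, G (a, b)) = P a * ∑' k, P k :=
      fun a => by simp only [hG]; exact ENNReal.tsum_mul_left
    simp only [h1]
    rw [ENNReal.tsum_mul_right]
  set gD : ℕ → ℕ × ℕ := fun k => (k, k) with hgD
  set gL : ℕ × ℕ → ℕ × ℕ := fun dk => (dk.2, dk.2 + dk.1 + 1) with hgL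
  set gU : ℕ × ℕ → ℕ × ℕ := fun dk => (dk.2 + dk.1 + 1, dk.2) with hgU
  have hDinj : Function.Injective gD := fun a b h => (Prod.mk.injEq _ _ _ _ ▸ h).1
  have hLinj : Function.Injective gL := by
    intro a b h
    simp only [hgL, Prod.mk.injEq] at h
    exact Prod.ext (by omega) h.1
  have hUinj : Function.Injective gU := by
    intro a b h
    simp only [hgU, Prod.mk.injEq] at h
    exact Prod.ext (by omega) h.2
  have hdisj1 : Disjoint (Set.range gD) (Set.range gL ∪ Set.range gU) := by
    rw [Set.disjoint_left]
    rintro x ⟨k, rfl⟩ (⟨dk, h⟩ | ⟨dk, h⟩) <;>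
      · simp only [hgD, hgL, hgU, Prod.mk.injEq] at h; omega
  have hdisj2 : Disjoint (Set.range gL) (Set.range gU) := by
    rw [Set.disjoint_left]
    rintro x ⟨dk, rfl⟩ ⟨dk', h⟩
    simp only [hgL, hgU, Prod.mk.injEq] at h; omega
  have hD : ∑' x : (Set.range gD), G x = ∑' k, P k ^ 2 := by
    rw [tsum_range G hDinj]; simp [hG, hgD, sq]
  have hL : ∑' x : (Set.range gL), G x = ∑' dk : ℕ × ℕ, P dk.2 * P (dk.2 + dk.1 + 1) := by
    rw [tsum_range G hLinj]
  have hU : ∑' x : (Set.range gU), G x = ∑' dk : ℕ × ℕ, P dk.2 * P (dk.2 + dk.1 + 1) := by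
    rw [tsum_range G hUinj]
    simp only [hG, hgU]
    exact tsum_congr fun dk => mul_comm _ _
  have hsplit : ∑' x : ↥(Set.range gD ∪ (Set.range gL ∪ Set.range gU)), G x
      = (∑' k, P k ^ 2) + ((∑' dk : ℕ × ℕ, P dk.2 * P (dk.2 + dk.1 + 1))
        + (∑' dk : ℕ × ℕ, P dk.2 * P (dk.2 + dk.1 + 1))) := by
    rw [ENNReal.summable.tsum_union_disjoint hdisj1 ENNReal.summable,
      ENNReal.summable.tsum_union_disjoint hdisj2 ENNReal.summable, hD, hL, hU]
  rw [hRHS, ← hsplit]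
  exact ENNReal.summable.tsum_le_tsum_of_inj Subtype.val Subtype.val_injective (fun _ _ => zero_le)
    (fun _ => le_rfl) ENNReal.summable

/-- E[W] ≥ (n/2)(1 + Σ p_k²) where W = |{i + wᵢ}| for i.i.d. wᵢ with law (p_k). -/
theorem stmt6 {Ω : Type*} [MeasureSpace Ω] [IsProbabilityMeasure (ℙ : Measure Ω)]
    (n : ℕ) (w : Fin n → Ω → ℕ)
    (hmeas : ∀ i, Measurable (w i))
    (hindep : iIndepFun w ℙ)
    (p : ℕ → ℝ)
    (hp : ∀ (i : Fin n) (k : ℕ), (ℙ {ω | w i ω = k}).toReal = p k) :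
    ((n : ℝ) / 2) * (1 + ∑' k, p k ^ 2) ≤
      ∫ ω, ((Finset.univ.image (fun i : Fin n => (i : ℕ) + 1 + w i ω)).card : ℝ) := by
  classical
  rcases Nat.eq_zero_or_pos n with hn | hn
  · subst hn
    simp
  -- setup
  set i₀ : Fin n := ⟨0, hn⟩ with hi₀
  set P : ℕ → ℝ≥0∞ := fun k => ℙ {ω | w i₀ ω = k} with hPdef
  have hsetmeas : ∀ (i : Fin n) (k : ℕ), MeasurableSet {ω | w i ω = k} :=
    fun i k => hmeas i (MeasurableSet.singleton k)
  have hPval : ∀ (i : Fin n) (k : ℕ), ℙ {ω | w i ω = k} = P k := by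
    intro i k
    exact (ENNReal.toReal_eq_toReal_iff' (measure_ne_top _ _) (measure_ne_top _ _)).mp
      ((hp i k).trans (hp i₀ k).symm)
  have hptoReal : ∀ k, (P k).toReal = p k := fun k => hp i₀ k
  have hpnonneg : ∀ k, 0 ≤ p k := fun k => (hptoReal k) ▸ ENNReal.toReal_nonneg
  have hP1 : ∑' k, P k = 1 := by
    have hu : ⋃ k, {ω | w i₀ ω = k} = Set.univ := by
      ext ω; simp
    have hdisj : Pairwise (Function.onFun Disjoint fun k => {ω | w i₀ ω = k}) := by
      intro k l hkl
      rw [Function.onFun, Set.disjoint_left]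
      intro ω h1 h2
      exact hkl (by rw [← h1, ← h2])
    rw [hPdef, ← measure_iUnion hdisj (fun k => hsetmeas i₀ k), hu, measure_univ]
  -- events
  set A : Fin n → Fin n → Set Ω :=
    fun i j => {ω | (i : ℕ) + 1 + w i ω = (j : ℕ) + 1 + w j ω} with hA
  have hAeq : ∀ i j : Fin n, i < j →
      A i j = ⋃ k, ({ω | w i ω = k + ((j : ℕ) - i)} ∩ {ω | w j ω = k}) := by
    intro i j hij
    have hij' : (i : ℕ) < j := hij
    ext ω
    simp only [hA, Set.mem_iUnion, Set.mem_inter_iff, Set.mem_setOf_eq]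
    constructor
    · intro h
      exact ⟨w j ω, by omega, rfl⟩
    · rintro ⟨k, h1, h2⟩
      omega
  have hAdisj : ∀ i j : Fin n,
      Pairwise (Function.onFun Disjoint
        fun k => ({ω | w i ω = k + ((j : ℕ) - i)} ∩ {ω | w j ω = k})) := by
    intro i j k l hkl
    rw [Function.onFun, Set.disjoint_left]
    rintro ω ⟨_, h1⟩ ⟨_, h2⟩
    exact hkl (h1.symm.trans h2)
  have hAmeas : ∀ i j : Fin n, i < j → MeasurableSet (A i j) := by
    intro i j hij
    rw [hAeq i j hij]
    exact MeasurableSet.iUnion fun k => (hsetmeas i _).inter (hsetmeas j _)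
  have hAprob : ∀ i j : Fin n, i < j →
      ℙ (A i j) = ∑' k, P (k + ((j : ℕ) - i)) * P k := by
    intro i j hij
    rw [hAeq i j hij,
      measure_iUnion (hAdisj i j) (fun k => (hsetmeas i _).inter (hsetmeas j _))]
    refine tsum_congr fun k => ?_
    have hind : IndepFun (w i) (w j) ℙ := hindep.indepFun (ne_of_lt hij)
    have := hind.measure_inter_preimage_eq_mul {k + ((j : ℕ) - i)} {k}
      (measurableSet_singleton _) (measurableSet_singleton _)
    have he1 : {ω | w i ω = k + ((j : ℕ) - i)} = w i ⁻¹' {k + ((j : ℕ) - i)} := rfl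
    have he2 : {ω | w j ω = k} = w j ⁻¹' {k} := rfl
    rw [he1, he2, this, ← he1, ← he2, hPval i _, hPval j _]
  -- pairwise sum bound in ℝ≥0∞
  set Q : ℝ≥0∞ := ∑' dk : ℕ × ℕ, P dk.2 * P (dk.2 + dk.1 + 1) with hQdef
  set S₀ : Finset (Fin n × Fin n) := Finset.univ.filter (fun ij => ij.1 < ij.2) with hS₀
  have hsum_le : ∑ ij ∈ S₀, ℙ (A ij.1 ij.2) ≤ (n : ℝ≥0∞) * Q := by
    have hQalt : Q = ∑' d : ℕ, ∑' k : ℕ, P k * P (k + d + 1) := by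
      rw [hQdef, ENNReal.tsum_prod']
    set g : ℕ → ℝ≥0∞ := fun d => ∑' k, P k * P (k + d + 1) with hg
    have hj : ∀ j : Fin n,
        ∑ i ∈ Finset.univ.filter (fun i : Fin n => i < j), ℙ (A i j) ≤ Q := by
      intro j
      have h1 : ∀ i ∈ Finset.univ.filter (fun i : Fin n => i < j),
          ℙ (A i j) = g ((j : ℕ) - (i : ℕ) - 1) := by
        intro i hi
        have hij : i < j := by simpa using hi
        have hij' : (i : ℕ) < (j : ℕ) := hij
        rw [hAprob i j hij, hg]
        refine tsum_congr fun k => ?_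
        have harg : k + ((j : ℕ) - (i : ℕ)) = k + ((j : ℕ) - (i : ℕ) - 1) + 1 := by omega
        rw [harg, mul_comm]
      have hinj : ∀ x ∈ Finset.univ.filter (fun i : Fin n => i < j),
          ∀ y ∈ Finset.univ.filter (fun i : Fin n => i < j),
          (j : ℕ) - (x : ℕ) - 1 = (j : ℕ) - (y : ℕ) - 1 → x = y := by
        intro x hx y hy hxy
        have hxj : (x : ℕ) < (j : ℕ) := by simpa using hx
        have hyj : (y : ℕ) < (j : ℕ) := by simpa using hy
        exact Fin.ext (by omega)
      calc ∑ i ∈ Finset.univ.filter (fun i : Fin n => i < j), ℙ (A i j)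
          = ∑ i ∈ Finset.univ.filter (fun i : Fin n => i < j), g ((j : ℕ) - (i : ℕ) - 1) :=
            Finset.sum_congr rfl h1
        _ = ∑ d ∈ (Finset.univ.filter (fun i : Fin n => i < j)).image
              (fun i : Fin n => (j : ℕ) - (i : ℕ) - 1), g d := (Finset.sum_image hinj).symm
        _ ≤ ∑' d, g d := ENNReal.sum_le_tsum _
        _ = Q := by rw [hQalt]
    have hsplit : ∑ ij ∈ S₀, ℙ (A ij.1 ij.2)
        = ∑ j : Fin n, ∑ i ∈ Finset.univ.filter (fun i : Fin n => i < j), ℙ (A i j) := by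
      rw [hS₀, Finset.sum_filter, ← Finset.univ_product_univ, Finset.sum_product_right]
      exact Finset.sum_congr rfl fun j _ => (Finset.sum_filter _ _).symm
    rw [hsplit]
    calc ∑ j : Fin n, ∑ i ∈ Finset.univ.filter (fun i : Fin n => i < j), ℙ (A i j)
        ≤ ∑ _j : Fin n, Q := Finset.sum_le_sum fun j _ => hj j
      _ = (n : ℝ≥0∞) * Q := by
          simp [Finset.sum_const, nsmul_eq_mul]
  -- toReal consequences
  have hkey := partition_lemma P
  rw [hP1, mul_one] at hkey
  have hS2top : (∑' k, P k ^ 2) ≠ ∞ := by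
    intro h
    rw [h] at hkey
    simp at hkey
  have hQtop : Q ≠ ∞ := by
    intro h
    rw [hQdef] at h
    rw [h] at hkey
    simp at hkey
  have hS2toReal : (∑' k, P k ^ 2).toReal = ∑' k, p k ^ 2 := by
    rw [ENNReal.tsum_toReal_eq (fun k => ENNReal.pow_ne_top (measure_ne_top _ _))]
    exact tsum_congr fun k => by rw [ENNReal.toReal_pow, hptoReal]
  have hQle : Q.toReal ≤ (1 - ∑' k, p k ^ 2) / 2 := by
    have h1 : ((∑' k, P k ^ 2) + (Q + Q)).toReal ≤ (1 : ℝ≥0∞).toReal :=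
      ENNReal.toReal_mono ENNReal.one_ne_top hkey
    rw [ENNReal.toReal_add hS2top (ENNReal.add_ne_top.mpr ⟨hQtop, hQtop⟩),
      ENNReal.toReal_add hQtop hQtop, ENNReal.toReal_one, hS2toReal] at h1
    linarith
  have hEN : ∑ ij ∈ S₀, (ℙ (A ij.1 ij.2)).toReal ≤ (n : ℝ) * ((1 - ∑' k, p k ^ 2) / 2) := by
    have h1 : (∑ ij ∈ S₀, ℙ (A ij.1 ij.2)).toReal ≤ ((n : ℝ≥0∞) * Q).toReal :=
      ENNReal.toReal_mono (by
        exact ENNReal.mul_ne_top (ENNReal.natCast_ne_top n) hQtop) hsum_le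
    rw [ENNReal.toReal_sum (fun ij _ => measure_ne_top _ _)] at h1
    rw [ENNReal.toReal_mul, ENNReal.toReal_natCast] at h1
    calc ∑ ij ∈ S₀, (ℙ (A ij.1 ij.2)).toReal ≤ (n : ℝ) * Q.toReal := h1
      _ ≤ (n : ℝ) * ((1 - ∑' k, p k ^ 2) / 2) := by
          apply mul_le_mul_of_nonneg_left hQle (by positivity)
  -- integration
  set C : Ω → ℝ :=
    fun ω => ((Finset.univ.image (fun i : Fin n => (i : ℕ) + 1 + w i ω)).card : ℝ) with hC
  have hCmeas : Measurable C := by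
    have hfmeas : Measurable (fun ω => (fun i => w i ω : Fin n → ℕ)) :=
      measurable_pi_lambda _ (fun i => hmeas i)
    have : C = (fun v : Fin n → ℕ =>
        ((Finset.univ.image (fun i : Fin n => (i : ℕ) + 1 + v i)).card : ℝ)) ∘
        (fun ω => (fun i => w i ω)) := rfl
    rw [this]
    exact (measurable_of_countable _).comp hfmeas
  have hCint : Integrable C ℙ := by
    refine Integrable.mono' (integrable_const (n : ℝ)) hCmeas.aestronglyMeasurable
      (Filter.Eventually.of_forall fun ω => ?_)
    rw [hC]
    simp only [Real.norm_natCast]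
    exact_mod_cast le_trans (Finset.card_image_le) (by simp)
  set N : Ω → ℝ := fun ω => ∑ ij ∈ S₀, Set.indicator (A ij.1 ij.2) (fun _ => (1 : ℝ)) ω with hN
  have hS₀lt : ∀ ij ∈ S₀, ij.1 < ij.2 := by
    intro ij hij
    simpa [hS₀] using hij
  have hNint : Integrable N ℙ := by
    apply integrable_finset_sum
    intro ij hij
    exact (integrable_const (1 : ℝ)).indicator (hAmeas _ _ (hS₀lt ij hij))
  have hNval : ∫ ω, N ω = ∑ ij ∈ S₀, (ℙ (A ij.1 ij.2)).toReal := by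
    rw [hN, integral_finset_sum _
      (fun ij hij => (integrable_const (1 : ℝ)).indicator (hAmeas _ _ (hS₀lt ij hij)))]
    refine Finset.sum_congr rfl fun ij hij => ?_
    rw [integral_indicator_const (1 : ℝ) (hAmeas _ _ (hS₀lt ij hij))]
    simp
    rfl
  have hpoint : ∀ ω, (n : ℝ) ≤ C ω + N ω := by
    intro ω
    have hcomb := comb_lemma (fun i : Fin n => (i : ℕ) + 1 + w i ω)
    have hNω : N ω = ((Finset.univ.filter (fun ij : Fin n × Fin n =>
        ij.1 < ij.2 ∧ (ij.1 : ℕ) + 1 + w ij.1 ω = (ij.2 : ℕ) + 1 + w ij.2 ω)).card : ℝ) := by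
      simp only [hN, Set.indicator_apply]
      rw [hS₀, Finset.sum_filter, Finset.card_filter]
      push_cast
      refine Finset.sum_congr rfl fun ij _ => ?_
      by_cases h1 : ij.1 < ij.2
      · by_cases h2 : ω ∈ A ij.1 ij.2
        · have h3 : (ij.1 : ℕ) + 1 + w ij.1 ω = (ij.2 : ℕ) + 1 + w ij.2 ω := h2
          simp [h1, h2, h3]
        · have h3 : ¬((ij.1 : ℕ) + 1 + w ij.1 ω = (ij.2 : ℕ) + 1 + w ij.2 ω) := h2
          simp [h1, h2, h3]
      · simp [h1]
    have hCω : C ω = ((Finset.univ.image (fun i : Fin n => (i : ℕ) + 1 + w i ω)).card : ℝ) := rfl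
    rw [hNω, hCω]
    exact_mod_cast hcomb
  have hint : (n : ℝ) ≤ (∫ ω, C ω) + ∫ ω, N ω := by
    have h := integral_mono (integrable_const (n : ℝ)) (hCint.add hNint) hpoint
    simp only [Pi.add_apply] at h
    rwa [integral_const, probReal_univ, smul_eq_mul, one_mul,
      integral_add hCint hNint] at h
  have hNle : ∫ ω, N ω ≤ (n : ℝ) * ((1 - ∑' k, p k ^ 2) / 2) := hNval ▸ hEN
  show ((n : ℝ) / 2) * (1 + ∑' k, p k ^ 2) ≤ ∫ ω, C ω
  linarith
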